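/- Let $\pi$ be a probability measure, $f:\mathcal{X}\to[0,1]$ measurable, $0\le\lambda<1$, $t>0$, and suppose $r>\lambda\,\mathrm{ess\,sup}_x e^{tf(x)}$ satisfies $\int_{\mathcal{X}}\frac{(1-\lambda)e^{tf(x)}}{r-\lambda e^{tf(x)}}\,\pi(dx)=1$. Then the function $g(x)=\frac{e^{tf(x)/2}}{r-\lambda e^{tf(x)}}$ is $\pi$-a.s. positive, lies in $L^2(\pi)$, and satisfies $\widehat{Q}_t g = r g$ $\pi$-a.s., where $\widehat{Q}_t h(x) = e^{tf(x)/2}\big((1-\lambda)\pi(e^{tf/2}h)+\lambda e^{tf(x)/2}h(x)\big)$. -/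

import Mathlib

open MeasureTheory

/-- if `r > λ esssup e^{tf}` solves `∫ (1-λ)e^{tf}/(r - λe^{tf}) dπ = 1`, then
`g(x) = e^{tf(x)/2}/(r - λe^{tf(x)})` is a.s. positive, in `L²(π)`, and is an eigenfunction
of the tilted operator `Q̂ₜ` with eigenvalue `r`. -/
theorem hoeffding_stmt4
    {X : Type*} [MeasurableSpace X] (π : Measure X) [IsProbabilityMeasure π]
    (f : X → ℝ) (hf : Measurable f) (hf01 : ∀ x, f x ∈ Set.Icc (0 : ℝ) 1)
    (lam : ℝ) (hlam0 : 0 ≤ lam) (hlam1 : lam < 1) (t : ℝ) (ht : 0 < t)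
    (r : ℝ) (hr : r > lam * essSup (fun x => Real.exp (t * f x)) π)
    (hreq : ∫ x, (1 - lam) * Real.exp (t * f x) / (r - lam * Real.exp (t * f x)) ∂π = 1)
    (g : X → ℝ)
    (hg : ∀ x, g x = Real.exp (t * f x / 2) / (r - lam * Real.exp (t * f x))) :
    (∀ᵐ x ∂π, 0 < g x) ∧ MemLp g 2 π ∧
    (∀ᵐ x ∂π, Real.exp (t * f x / 2) *
        ((1 - lam) * (∫ y, Real.exp (t * f y / 2) * g y ∂π)
          + lam * Real.exp (t * f x / 2) * g x) = r * g x) := by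
  set E : X → ℝ := fun x => Real.exp (t * f x) with hE
  set M : ℝ := essSup E π with hM
  have hEbd : ∀ x, E x ≤ Real.exp t := fun x =>
    Real.exp_le_exp.mpr (by nlinarith [(hf01 x).1, (hf01 x).2])
  have hbdd : Filter.IsBoundedUnder (· ≤ ·) (ae π) E :=
    ⟨Real.exp t, Filter.eventually_map.mpr (Filter.Eventually.of_forall hEbd)⟩
  have hMae : ∀ᵐ x ∂π, E x ≤ M := ae_le_essSup hbdd
  have hMpos : (0 : ℝ) ≤ M := by
    obtain ⟨x, hx⟩ :=
      (hMae.and (Filter.Eventually.of_forall (fun x => (Real.exp_pos (t * f x)).le))).exists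
    exact hx.2.trans hx.1
  have hr0 : 0 < r := lt_of_le_of_lt (by positivity) hr
  have hd : ∀ᵐ x ∂π, 0 < r - lam * E x := by
    filter_upwards [hMae] with x hx
    nlinarith [mul_le_mul_of_nonneg_left hx hlam0]
  have hδ : 0 < r - lam * M := by linarith
  -- positivity
  have hpos : ∀ᵐ x ∂π, 0 < g x := by
    filter_upwards [hd] with x hx
    rw [hg x]
    exact div_pos (Real.exp_pos _) hx
  refine ⟨hpos, ?_, ?_⟩
  · -- Memℒp
    have hmeas : Measurable g := by
      have : g = fun x => Real.exp (t * f x / 2) / (r - lam * Real.exp (t * f x)) :=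
        funext hg
      rw [this]; fun_prop
    refine MemLp.of_bound hmeas.aestronglyMeasurable (Real.exp (t / 2) / (r - lam * M)) ?_
    filter_upwards [hd, hMae] with x hx hMx
    rw [hg x, Real.norm_eq_abs, abs_of_pos (div_pos (Real.exp_pos _) hx)]
    apply div_le_div₀ (Real.exp_nonneg _) ?_ hδ (by nlinarith [mul_le_mul_of_nonneg_left hMx hlam0])
    exact Real.exp_le_exp.mpr (by nlinarith [(hf01 x).1, (hf01 x).2])
  · -- eigenfunction
    have hI : ∫ y, Real.exp (t * f y / 2) * g y ∂π
        = ∫ y, E y / (r - lam * E y) ∂π := by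
      apply integral_congr_ae
      filter_upwards with y
      rw [hg y, mul_div_assoc', ← Real.exp_add]
      congr 2
      ring
    have h1 : (1 - lam) * ∫ y, E y / (r - lam * E y) ∂π = 1 := by
      conv_rhs => rw [← hreq]
      rw [← MeasureTheory.integral_const_mul]
      apply integral_congr_ae
      filter_upwards with y
      rw [mul_div_assoc]
    filter_upwards [hd] with x hx
    rw [hI, h1, hg x]
    have hsq : Real.exp (t * f x / 2) * Real.exp (t * f x / 2) = E x := by
      rw [← Real.exp_add]; congr 1; ring
    have hne : r - lam * Real.exp (t * f x) ≠ 0 := ne_of_gt hx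
    field_simp
    linear_combination lam * hsq
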